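/- The fixed-point sublattice E₈^τ = {x ∈ E₈ : τ(x) = x} is the set of all vectors m₁e₀ + m₂(e₁+e₂+⋯+e₇) with (m₁,m₂) ∈ K₇, and the linear map ψ(m₁,m₂) = m₁e₀ + m₂(e₁+⋯+e₇) is an isometry from K₇ onto E₈^τ (i.e., ψ is an injective additive map with image E₈^τ satisfying (ψ(u),ψ(v))_{ℝ⁸} = (u,v)_{K₇} for all u,v ∈ K₇). -/

import Mathlib

/-- The `E₈` lattice inside `ℝ⁸`: all coordinates in `ℤ` or all in `ℤ + 1/2`,
with even coordinate sum. -/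
def E8 : Set (Fin 8 → ℝ) :=
  {x | ((∀ i, ∃ k : ℤ, x i = k) ∨ (∀ i, ∃ k : ℤ, x i = k + 1 / 2)) ∧
    ∃ k : ℤ, ∑ i, x i = 2 * k}

/-- The order-7 isometry `τ` of `ℝ⁸`: `e₀↦e₀, e₁↦e₇, eᵢ↦eᵢ₋₁` for `2 ≤ i ≤ 7`,
written in coordinates. -/
def tau7 (x : Fin 8 → ℝ) : Fin 8 → ℝ := x ∘ ![0, 2, 3, 4, 5, 6, 7, 1]

/-- The rank-2 lattice `K₇ ⊆ ℚ²`: either both coordinates integral with even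
sum, or both in `ℤ + 1/2` with odd sum. -/
def K7lat : Set (Fin 2 → ℚ) :=
  {m | ((∀ i, ∃ k : ℤ, m i = k) ∧ ∃ k : ℤ, m 0 + m 1 = 2 * k) ∨
    ((∀ i, ∃ k : ℤ, m i = k + 1 / 2) ∧ ∃ k : ℤ, m 0 + m 1 = 2 * k + 1)}

/-- The bilinear form on `K₇`, whose quadratic form is `m₁² + 7m₂²`. -/
def bK7 (u v : Fin 2 → ℚ) : ℚ := u 0 * v 0 + 7 * (u 1 * v 1)

/-- The map `ψ(m₁,m₂) = m₁e₀ + m₂(e₁+⋯+e₇)`. -/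
def psiK7 (m : Fin 2 → ℚ) : Fin 8 → ℝ :=
  ![(m 0 : ℝ), (m 1 : ℝ), (m 1 : ℝ), (m 1 : ℝ), (m 1 : ℝ), (m 1 : ℝ), (m 1 : ℝ), (m 1 : ℝ)]

lemma psiK7_zero (m : Fin 2 → ℚ) : psiK7 m 0 = (m 0 : ℝ) := rfl

lemma psiK7_ne (m : Fin 2 → ℚ) (i : Fin 8) (h : i ≠ 0) : psiK7 m i = (m 1 : ℝ) := by
  fin_cases i
  · exact absurd rfl h
  all_goals rfl

lemma psiK7_sum (m : Fin 2 → ℚ) : ∑ i, psiK7 m i = (m 0 : ℝ) + 7 * (m 1 : ℝ) := by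
  rw [Fin.sum_univ_eight]
  show (m 0 : ℝ) + m 1 + m 1 + m 1 + m 1 + m 1 + m 1 + m 1 = _
  ring

lemma psiK7_prod_sum (u v : Fin 2 → ℚ) :
    ∑ i, psiK7 u i * psiK7 v i = (u 0 : ℝ) * v 0 + 7 * ((u 1 : ℝ) * v 1) := by
  rw [Fin.sum_univ_eight]
  show (u 0 : ℝ) * v 0 + (u 1 : ℝ) * v 1 + (u 1 : ℝ) * v 1 + (u 1 : ℝ) * v 1
    + (u 1 : ℝ) * v 1 + (u 1 : ℝ) * v 1 + (u 1 : ℝ) * v 1 + (u 1 : ℝ) * v 1 = _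
  ring

/-- the fixed-point sublattice `E₈^τ` is exactly the image of `K₇`
under `ψ`, and `ψ` is an isometry from `K₇` onto `E₈^τ`: an injective additive
map with image `E₈^τ` satisfying `(ψu, ψv)_{ℝ⁸} = (u,v)_{K₇}` for all `u, v ∈ K₇`. -/
theorem E8_tau_fixed_lattice :
    {x | x ∈ E8 ∧ tau7 x = x} = psiK7 '' K7lat ∧
    (∀ u v : Fin 2 → ℚ, psiK7 (u + v) = psiK7 u + psiK7 v) ∧
    Function.Injective psiK7 ∧
    (∀ u ∈ K7lat, ∀ v ∈ K7lat, ∑ i, psiK7 u i * psiK7 v i = ((bK7 u v : ℚ) : ℝ)) := by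
  refine ⟨?_, ?_, ?_, ?_⟩
  · ext x
    simp only [Set.mem_setOf_eq, Set.mem_image]
    constructor
    · rintro ⟨⟨hint, k, hsum⟩, hfix⟩
      have h2 : x 2 = x 1 := congrFun hfix 1
      have h3 : x 3 = x 2 := congrFun hfix 2
      have h4 : x 4 = x 3 := congrFun hfix 3
      have h5 : x 5 = x 4 := congrFun hfix 4
      have h6 : x 6 = x 5 := congrFun hfix 5
      have h7 : x 7 = x 6 := congrFun hfix 6
      have hsum' : x 0 + 7 * x 1 = 2 * k := by
        rw [Fin.sum_univ_eight] at hsum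
        rw [h2, h3, h4, h5, h6, h7] at hsum
        linarith
      rcases hint with hZ | hH
      · obtain ⟨k0, hk0⟩ := hZ 0
        obtain ⟨k1, hk1⟩ := hZ 1
        have hkey : (k0 : ℝ) + 7 * k1 = 2 * k := by rw [← hk0, ← hk1]; exact hsum'
        have hkeyZ : k0 + 7 * k1 = 2 * k := by exact_mod_cast hkey
        refine ⟨![(k0 : ℚ), (k1 : ℚ)], Or.inl ⟨?_, ⟨k - 3 * k1, ?_⟩⟩, ?_⟩
        · intro i; fin_cases i <;> simp
        · show (k0 : ℚ) + (k1 : ℚ) = 2 * (((k - 3 * k1 : ℤ) : ℚ))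
          push_cast
          have : k0 + k1 = 2 * (k - 3 * k1) := by linarith
          have h' : ((k0 + k1 : ℤ) : ℚ) = ((2 * (k - 3 * k1) : ℤ) : ℚ) := by rw [this]
          push_cast at h'
          linarith
        · funext i
          by_cases hi : i = 0
          · subst hi; rw [psiK7_zero]; simp [hk0]
          · rw [psiK7_ne _ _ hi]
            have hx1 : x i = x 1 := by
              fin_cases i <;> first
                | exact absurd rfl hi
                | rfl
                | simp [h2, h3, h4, h5, h6, h7]
            rw [hx1, hk1]; norm_num
      · obtain ⟨k0, hk0⟩ := hH 0
        obtain ⟨k1, hk1⟩ := hH 1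
        have hkey : ((k0 : ℝ) + 1 / 2) + 7 * ((k1 : ℝ) + 1 / 2) = 2 * k := by
          rw [← hk0, ← hk1]; exact hsum'
        have hkeyR : (k0 : ℝ) + 7 * k1 + 4 = 2 * k := by linarith
        have hkeyZ : k0 + 7 * k1 + 4 = 2 * k := by exact_mod_cast hkeyR
        refine ⟨![(k0 : ℚ) + 1 / 2, (k1 : ℚ) + 1 / 2], Or.inr ⟨?_, ⟨k - 3 * k1 - 2, ?_⟩⟩, ?_⟩
        · intro i; fin_cases i
          · exact ⟨k0, rfl⟩
          · exact ⟨k1, rfl⟩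
        · show ((k0 : ℚ) + 1 / 2) + ((k1 : ℚ) + 1 / 2) = 2 * (((k - 3 * k1 - 2 : ℤ) : ℚ)) + 1
          push_cast
          have : k0 + k1 = 2 * (k - 3 * k1 - 2) := by linarith
          have : (k0 : ℚ) + k1 = 2 * ((k : ℚ) - 3 * k1 - 2) := by exact_mod_cast this
          linarith
        · funext i
          by_cases hi : i = 0
          · subst hi; rw [psiK7_zero]
            show ((((k0 : ℚ) + 1 / 2) : ℚ) : ℝ) = x 0
            rw [hk0]; push_cast; ring
          · rw [psiK7_ne _ _ hi]
            have hx1 : x i = x 1 := by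
              fin_cases i <;> first
                | exact absurd rfl hi
                | rfl
                | simp [h2, h3, h4, h5, h6, h7]
            show ((((k1 : ℚ) + 1 / 2) : ℚ) : ℝ) = x i
            rw [hx1, hk1]; push_cast; ring
    · rintro ⟨m, hm, rfl⟩
      refine ⟨⟨?_, ?_⟩, ?_⟩
      · rcases hm with ⟨hZ, _⟩ | ⟨hH, _⟩
        · left; intro i
          obtain ⟨k0, hk0⟩ := hZ 0
          obtain ⟨k1, hk1⟩ := hZ 1
          by_cases hi : i = 0
          · exact ⟨k0, by rw [hi, psiK7_zero, hk0]; norm_num⟩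
          · exact ⟨k1, by rw [psiK7_ne _ _ hi, hk1]; norm_num⟩
        · right; intro i
          obtain ⟨k0, hk0⟩ := hH 0
          obtain ⟨k1, hk1⟩ := hH 1
          by_cases hi : i = 0
          · exact ⟨k0, by rw [hi, psiK7_zero, hk0]; push_cast; ring⟩
          · exact ⟨k1, by rw [psiK7_ne _ _ hi, hk1]; push_cast; ring⟩
      · rw [psiK7_sum]
        rcases hm with ⟨hZ, k, hk⟩ | ⟨hH, k, hk⟩
        · obtain ⟨k1, hk1⟩ := hZ 1
          refine ⟨k + 3 * k1, ?_⟩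
          have h1 : m 0 + 7 * m 1 = 2 * ((k : ℚ) + 3 * k1) := by rw [hk1] at hk ⊢; linarith
          have : (m 0 : ℝ) + 7 * (m 1 : ℝ) = 2 * ((k : ℝ) + 3 * k1) := by exact_mod_cast h1
          rw [this]; push_cast; ring
        · obtain ⟨k1, hk1⟩ := hH 1
          refine ⟨k + 3 * k1 + 2, ?_⟩
          have h1 : m 0 + 7 * m 1 = 2 * ((k : ℚ) + 3 * k1 + 2) := by rw [hk1] at hk ⊢; linarith
          have : (m 0 : ℝ) + 7 * (m 1 : ℝ) = 2 * ((k : ℝ) + 3 * k1 + 2) := by exact_mod_cast h1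
          rw [this]; push_cast; ring
      · funext i
        fin_cases i <;> rfl
  · intro u v
    funext i
    by_cases hi : i = 0
    · subst hi
      simp only [Pi.add_apply, psiK7_zero]
      push_cast; ring
    · simp only [Pi.add_apply, psiK7_ne _ _ hi]
      push_cast; ring
  · intro u v h
    funext i
    fin_cases i
    · have := congrFun h 0
      rw [psiK7_zero, psiK7_zero] at this
      exact_mod_cast this
    · have := congrFun h 1
      rw [psiK7_ne u 1 (by decide), psiK7_ne v 1 (by decide)] at this
      exact_mod_cast this
  · intro u _ v _
    rw [psiK7_prod_sum, bK7]
    push_cast; ring
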